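/- Let k be a commutative ring and let Λ' be a set-partition of {1,...,r+1} with l = ℓ(Λ') parts, where 1 ≤ l ≤ n. Then V'(Λ') is isomorphic, as a k[W_{n-1}]-module, to H_{n-1}(l-1), the k[W_{n-1}]-submodule of U^{⊗(l-1)} generated by v_{n-l+1} ⊗ ... ⊗ v_{n-1}, where U is the k-span of v_1, ..., v_{n-1}. -/

import Mathlib

noncomputable section

open Equiv

/-- The linear action of a group `G` on the free `k`-module `X → k` of functions,
induced from a `G`-action on `X` by `(g • f) x = f (g⁻¹ • x)`. -/
def actEnd (k : Type) [CommRing k] (G : Type) [Group G] (X : Type) [MulAction G X] :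
    G →* Module.End k (X → k) where
  toFun g := LinearMap.funLeft k k fun x => g⁻¹ • x
  map_one' := by
    ext f x
    simp
  map_mul' g₁ g₂ := by
    ext f x
    simp [mul_smul]

/-- The diagonal (value-permutation) action of the symmetric group `W_n` on
`V^{⊗r}` (`V = k^n`), modelled as the free `k`-module on multi-indices `Fin r → Fin n`;
on basis vectors, `w ⬝ (v_{i_1} ⊗ ⋯ ⊗ v_{i_r}) = v_{w i_1} ⊗ ⋯ ⊗ v_{w i_r}`. -/
def permEnd (k : Type) [CommRing k] (n r : ℕ) :
    Equiv.Perm (Fin n) →* Module.End k ((Fin r → Fin n) → k) :=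
  actEnd k (Equiv.Perm (Fin n)) (Fin r → Fin n)

/-- `Φ_{n,r} : k[W_n] → End_k(V^{⊗r})`. -/
def PhiAlg (k : Type) [CommRing k] (n r : ℕ) :
    MonoidAlgebra k (Equiv.Perm (Fin n)) →ₐ[k] Module.End k ((Fin r → Fin n) → k) :=
  MonoidAlgebra.lift k (Module.End k ((Fin r → Fin n) → k)) (Equiv.Perm (Fin n)) (permEnd k n r)

/-- The restriction of `Φ_{n,r}` to the group algebra of a subgroup `G ≤ W_n`. -/
def PhiSub (k : Type) [CommRing k] (n r : ℕ) (G : Subgroup (Equiv.Perm (Fin n))) :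
    MonoidAlgebra k ↥G →ₐ[k] Module.End k ((Fin r → Fin n) → k) :=
  MonoidAlgebra.lift k (Module.End k ((Fin r → Fin n) → k)) ↥G ((permEnd k n r).comp G.subtype)

/-- `W_{n-1} = {w ∈ W_n : w(n) = n}`, the stabilizer of the last basis vector. -/
def stabLast (n : ℕ) (hn : 0 < n) : Subgroup (Equiv.Perm (Fin n)) :=
  MulAction.stabilizer (Equiv.Perm (Fin n)) (⟨n - 1, Nat.sub_lt hn Nat.one_pos⟩ : Fin n)

/-- `V(Λ)`: the span of the basis tensors whose multi-index has value-type `Λ`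
(the value-type of a multi-index `i` is the set-partition `Setoid.ker i` by fibers). -/
def Vpart (k : Type) [CommRing k] (n r : ℕ) (Λ : Setoid (Fin r)) :
    Submodule k ((Fin r → Fin n) → k) :=
  Submodule.span k {f | ∃ i : Fin r → Fin n, Setoid.ker i = Λ ∧ f = Pi.single i 1}

/-- `V'(Λ')`: the span of the basis tensors `v_{i_1} ⊗ ⋯ ⊗ v_{i_r} ⊗ v_n`
whose multi-index `(i_1, …, i_r, n)` has value-type `Λ'`. -/
def Vpart' (k : Type) [CommRing k] (n r : ℕ) (hn : 0 < n) (Λ' : Setoid (Fin (r + 1))) :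
    Submodule k ((Fin (r + 1) → Fin n) → k) :=
  Submodule.span k {f | ∃ i : Fin (r + 1) → Fin n, Setoid.ker i = Λ' ∧
    i (Fin.last r) = (⟨n - 1, Nat.sub_lt hn Nat.one_pos⟩ : Fin n) ∧ f = Pi.single i 1}

/-- The submodule `V^{⊗r} ⊗ v_n ⊆ V^{⊗(r+1)}`. -/
def lastSub (k : Type) [CommRing k] (n r : ℕ) (hn : 0 < n) :
    Submodule k ((Fin (r + 1) → Fin n) → k) :=
  Submodule.span k {f | ∃ i : Fin (r + 1) → Fin n,
    i (Fin.last r) = (⟨n - 1, Nat.sub_lt hn Nat.one_pos⟩ : Fin n) ∧ f = Pi.single i 1}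

/-- The multi-index of the tensor `v_{n-l+1} ⊗ ⋯ ⊗ v_n`. -/
def baseIdx (n l : ℕ) (h : l ≤ n) : Fin l → Fin n :=
  fun α => ⟨n - l + α.1, by have := α.isLt; omega⟩

/-- `H_n(l)`: the `k[W_n]`-submodule of `V^{⊗l}` generated by `v_{n-l+1} ⊗ ⋯ ⊗ v_n`. -/
def Hmod (k : Type) [CommRing k] (n l : ℕ) (h : l ≤ n) :
    Submodule k ((Fin l → Fin n) → k) :=
  Submodule.span k
    (Set.range fun w : Equiv.Perm (Fin n) => permEnd k n l w (Pi.single (baseIdx n l h) 1))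

/-- The multi-index of the tensor `v_{n-m} ⊗ ⋯ ⊗ v_{n-1}` (inside `U = ⟨v_1, …, v_{n-1}⟩`). -/
def baseIdx' (n m : ℕ) (h : m < n) : Fin m → Fin n :=
  fun α => ⟨n - 1 - m + α.1, by have := α.isLt; omega⟩

/-- `H_{n-1}(m)`: the `k[W_{n-1}]`-submodule of `U^{⊗m}` generated by
`v_{n-m} ⊗ ⋯ ⊗ v_{n-1}`, where `U = ⟨v_1, …, v_{n-1}⟩`. -/
def Hprime (k : Type) [CommRing k] (n m : ℕ) (h : m < n) :
    Submodule k ((Fin m → Fin n) → k) :=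
  Submodule.span k
    (Set.range fun w : ↥(stabLast n (by omega)) =>
      permEnd k n m ↑w (Pi.single (baseIdx' n m h) 1))

/-- The Young subgroup `W_{(n-l,1^l)}` of permutations fixing each of the last `l` points. -/
def fixTop (n l : ℕ) : Subgroup (Equiv.Perm (Fin n)) where
  carrier := {w | ∀ j : Fin n, n - l ≤ (j : ℕ) → w j = j}
  one_mem' := by intro j _; rfl
  mul_mem' := by
    intro a b ha hb j hj
    simp only [Set.mem_setOf_eq] at ha hb
    rw [Equiv.Perm.mul_apply, hb j hj, ha j hj]
  inv_mem' := by
    intro a ha j hj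
    simp only [Set.mem_setOf_eq] at ha
    conv_lhs => rw [← ha j hj]
    exact Equiv.symm_apply_apply a j

/-- The index of the consecutive block (with block sizes `lam`) containing position `x`. -/
def blockIdx (lam : List ℕ) (x : ℕ) : ℕ :=
  ((List.range lam.length).filter fun t => (lam.take (t + 1)).sum ≤ x).length

/-- The Young subgroup `W_λ ≤ W_d`: permutations preserving each consecutive block
of sizes `λ_1, λ_2, …`. -/
def youngSubgroup (d : ℕ) (lam : List ℕ) : Subgroup (Equiv.Perm (Fin d)) where
  carrier := {w | ∀ j : Fin d, blockIdx lam ((w j : Fin d) : ℕ) = blockIdx lam (j : ℕ)}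
  one_mem' := by intro j; rfl
  mul_mem' := by
    intro a b ha hb j
    simp only [Set.mem_setOf_eq] at ha hb
    rw [Equiv.Perm.mul_apply, ha (b j), hb j]
  inv_mem' := by
    intro a ha j
    simp only [Set.mem_setOf_eq] at ha
    conv_rhs => rw [← (by simp : a (a⁻¹ j) = j)]
    rw [ha (a⁻¹ j)]

/-- `x_λ = Σ_{w ∈ W_λ} w ∈ k[W_d]`. -/
def xElt (k : Type) [CommRing k] (d : ℕ) (lam : List ℕ) :
    MonoidAlgebra k (Equiv.Perm (Fin d)) :=
  letI := Classical.decPred (· ∈ youngSubgroup d lam)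
  ∑ w ∈ Finset.univ.filter (· ∈ youngSubgroup d lam), MonoidAlgebra.single w (1 : k)

/-- `y_λ = Σ_{w ∈ W_λ} sgn(w) w ∈ k[W_d]`. -/
def yElt (k : Type) [CommRing k] (d : ℕ) (lam : List ℕ) :
    MonoidAlgebra k (Equiv.Perm (Fin d)) :=
  letI := Classical.decPred (· ∈ youngSubgroup d lam)
  ∑ w ∈ Finset.univ.filter (· ∈ youngSubgroup d lam),
    MonoidAlgebra.single w ((Equiv.Perm.sign w : ℤ) : k)

/-- `y_λ = Σ_{w ∈ W_λ ∩ G} sgn(w) w`, as an element of the group algebra of a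
subgroup `G ≤ W_d` (for `G = W_{n-1}` and `λ ⊢ n-1` this is the usual `y_λ ∈ k[W_{n-1}]`). -/
def yEltSub (k : Type) [CommRing k] {d : ℕ} (G : Subgroup (Equiv.Perm (Fin d)))
    (lam : List ℕ) : MonoidAlgebra k ↥G :=
  letI : Fintype ↥G := Fintype.ofFinite ↥G
  letI := Classical.decPred fun w : ↥G => (w : Equiv.Perm (Fin d)) ∈ youngSubgroup d lam
  ∑ w ∈ Finset.univ.filter (fun w : ↥G => (w : Equiv.Perm (Fin d)) ∈ youngSubgroup d lam),
    MonoidAlgebra.single w ((Equiv.Perm.sign (w : Equiv.Perm (Fin d)) : ℤ) : k)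

/-- The dominance order on partitions (as lists of parts): `lam ⊵ mu`. -/
def Dominates (lam mu : List ℕ) : Prop :=
  ∀ t : ℕ, (mu.take t).sum ≤ (lam.take t).sum

/-- The conjugate (transpose) partition: `μᵀ_i = #{j : μ_j ≥ i}`. -/
def conjList (mu : List ℕ) : List ℕ :=
  (List.range mu.headI).map fun i => (mu.filter fun p => i < p).length

/-- `lam` is a partition of `d`: positive parts, in weakly decreasing order, summing to `d`. -/
def IsPartitionList (d : ℕ) (lam : List ℕ) : Prop :=
  (∀ p ∈ lam, 0 < p) ∧ lam.sum = d ∧ lam.Pairwise (· ≥ ·)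

/-- The hook partition `α(d,r) = (d-r, 1^r)`. -/
def hookPartition (d r : ℕ) : List ℕ := (d - r) :: List.replicate r 1

/-- The representation of `k[W_d]` on the permutation module `M^λ`, the free `k`-module
on the left cosets `W_d / W_λ` with `W_d` acting by left translation. -/
def PhiQuot (k : Type) [CommRing k] (d : ℕ) (lam : List ℕ) :
    MonoidAlgebra k (Equiv.Perm (Fin d)) →ₐ[k]
      Module.End k ((Equiv.Perm (Fin d) ⧸ youngSubgroup d lam) → k) :=
  MonoidAlgebra.lift k _ _
    (actEnd k (Equiv.Perm (Fin d)) (Equiv.Perm (Fin d) ⧸ youngSubgroup d lam))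

/-- The representation of `k[G]` (for `G ≤ W_d`) on the permutation module on the
left cosets `G / (G ∩ W_λ)`. -/
def PhiQuotSub (k : Type) [CommRing k] {d : ℕ} (G : Subgroup (Equiv.Perm (Fin d)))
    (lam : List ℕ) :
    MonoidAlgebra k ↥G →ₐ[k]
      Module.End k ((↥G ⧸ Subgroup.comap G.subtype (youngSubgroup d lam)) → k) :=
  MonoidAlgebra.lift k _ _
    (actEnd k ↥G (↥G ⧸ Subgroup.comap G.subtype (youngSubgroup d lam)))

/-- The Stirling number of the second kind `S(r,l)`: the number of set-partitions
of an `r`-element set into exactly `l` nonempty blocks. -/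
def stirling (r l : ℕ) : ℕ :=
  Nat.card {Λ : Setoid (Fin r) // Nat.card (Quotient Λ) = l}


/-! ### Auxiliary lemmas -/

lemma permEnd_single (k : Type) [CommRing k] (n m : ℕ) (w : Equiv.Perm (Fin n))
    (x : Fin m → Fin n) :
    permEnd k n m w (Pi.single x 1) = Pi.single (fun a => w (x a)) 1 := by
  classical
  funext y
  simp only [permEnd, actEnd, MonoidHom.coe_mk, OneHom.coe_mk, LinearMap.funLeft_apply]
  rw [Pi.single_apply, Pi.single_apply]
  congr 1
  simp only [eq_iff_iff]
  constructor
  · intro hxy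
    funext a
    have := congrFun hxy a
    simp only [Pi.smul_apply, Equiv.Perm.smul_def] at this
    rw [← this, (by simp : ∀ z, w (w⁻¹ z) = z)]
  · intro hy
    funext a
    simp [hy, Pi.smul_apply, Equiv.Perm.smul_def]

lemma exists_perm_comp {a b : ℕ} (f g : Fin a → Fin b) (hf : Function.Injective f)
    (hg : Function.Injective g) : ∃ σ : Equiv.Perm (Fin b), ∀ x, σ (f x) = g x := by
  classical
  have h1 : Fintype.card (Set.range f) = Fintype.card (Fin a) :=
    Set.card_range_of_injective hf
  have h2 : Fintype.card (Set.range g) = Fintype.card (Fin a) :=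
    Set.card_range_of_injective hg
  have hcard : Fintype.card ↥(Set.range f)ᶜ = Fintype.card ↥(Set.range g)ᶜ := by
    rw [Fintype.card_compl_set, Fintype.card_compl_set, h1, h2]
  let eR : ↥(Set.range f) ≃ ↥(Set.range g) :=
    (Equiv.ofInjective f hf).symm.trans (Equiv.ofInjective g hg)
  let eC : ↥(Set.range f)ᶜ ≃ ↥(Set.range g)ᶜ := Fintype.equivOfCardEq hcard
  let σ : Equiv.Perm (Fin b) :=
    ((Equiv.sumCompl (· ∈ Set.range f)).symm.trans
      ((Equiv.sumCongr eR eC).trans (Equiv.sumCompl (· ∈ Set.range g))))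
  refine ⟨σ, fun x => ?_⟩
  have h3 : (Equiv.sumCompl (· ∈ Set.range f)).symm (f x) = Sum.inl ⟨f x, ⟨x, rfl⟩⟩ :=
    Equiv.sumCompl_symm_apply_of_pos ⟨x, rfl⟩
  show ((Equiv.sumCompl (· ∈ Set.range g)) (Equiv.sumCongr eR eC
    ((Equiv.sumCompl (· ∈ Set.range f)).symm (f x)))) = g x
  rw [h3]
  simp only [Equiv.sumCongr_apply, Sum.map_inl, Equiv.sumCompl_apply_inl]
  have h4 : eR ⟨f x, ⟨x, rfl⟩⟩ = ⟨g x, ⟨x, rfl⟩⟩ := by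
    have : (⟨f x, ⟨x, rfl⟩⟩ : ↥(Set.range f)) = Equiv.ofInjective f hf x := rfl
    simp only [eR, Equiv.trans_apply, this, Equiv.symm_apply_apply]
    rfl
  rw [h4]
  exact Equiv.sumCompl_apply_inl _

def lastPt (n : ℕ) (hn : 0 < n) : Fin n := ⟨n - 1, Nat.sub_lt hn Nat.one_pos⟩

lemma mem_stabLast {n : ℕ} {hn : 0 < n} {w : Equiv.Perm (Fin n)} :
    w ∈ stabLast n hn ↔ w (lastPt n hn) = lastPt n hn := by
  rw [stabLast, MulAction.mem_stabilizer_iff]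
  rfl

lemma snoc_inj {n m : ℕ} {hn : 0 < n} {j : Fin m → Fin n} (hinj : Function.Injective j)
    (havoid : ∀ a, j a ≠ lastPt n hn) :
    Function.Injective (Fin.snoc j (lastPt n hn) : Fin (m + 1) → Fin n) := by
  intro x y hxy
  rcases Fin.eq_castSucc_or_eq_last x with ⟨x', rfl⟩ | rfl <;>
    rcases Fin.eq_castSucc_or_eq_last y with ⟨y', rfl⟩ | rfl <;>
      simp only [Fin.snoc_castSucc, Fin.snoc_last] at hxy
  · rw [hinj hxy]
  · exact absurd hxy (havoid x')
  · exact absurd hxy.symm (havoid y')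
  · rfl

lemma baseIdx'_inj {n m : ℕ} (h : m < n) : Function.Injective (baseIdx' n m h) := by
  intro x y hxy
  have := congrArg Fin.val hxy
  simp only [baseIdx'] at this
  exact Fin.ext (by omega)

lemma baseIdx'_avoid {n m : ℕ} (h : m < n) (hn : 0 < n) (a : Fin m) :
    baseIdx' n m h a ≠ lastPt n hn := by
  intro hc
  have := congrArg Fin.val hc
  simp only [baseIdx', lastPt] at this
  have := a.isLt
  omega

def avoidInj (n m : ℕ) (hn : 0 < n) : Set (Fin m → Fin n) :=
  {j | Function.Injective j ∧ ∀ a, j a ≠ lastPt n hn}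

lemma Hprime_eq (k : Type) [CommRing k] {n m : ℕ} (h : m < n) (hn : 0 < n) :
    Hprime k n m h
      = Submodule.span k ((fun j => Pi.single j (1:k)) '' avoidInj n m hn) := by
  rw [Hprime]
  congr 1
  ext f
  constructor
  · rintro ⟨w, rfl⟩
    beta_reduce
    rw [permEnd_single]
    refine ⟨fun a => (w : Equiv.Perm (Fin n)) (baseIdx' n m h a), ⟨?_, ?_⟩, rfl⟩
    · exact (w : Equiv.Perm (Fin n)).injective.comp (baseIdx'_inj h)
    · intro a hc
      have hw : (w : Equiv.Perm (Fin n)) (lastPt n hn) = lastPt n hn := mem_stabLast.mp w.2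
      exact baseIdx'_avoid h hn a ((w : Equiv.Perm (Fin n)).injective (hc.trans hw.symm))
  · rintro ⟨j, ⟨hinj, havoid⟩, rfl⟩
    obtain ⟨σ, hσ⟩ := exists_perm_comp
      (Fin.snoc (baseIdx' n m h) (lastPt n hn)) (Fin.snoc j (lastPt n hn))
      (snoc_inj (baseIdx'_inj h) (baseIdx'_avoid h hn))
      (snoc_inj hinj havoid)
    have hσpt : σ (lastPt n hn) = lastPt n hn := by
      have := hσ (Fin.last m)
      simpa only [Fin.snoc_last] using this
    refine ⟨⟨σ, mem_stabLast.mpr hσpt⟩, ?_⟩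
    beta_reduce
    rw [permEnd_single]
    have hfun : (fun a => σ (baseIdx' n m h a)) = j := by
      funext a
      have := hσ (Fin.castSucc a)
      simpa only [Fin.snoc_castSucc] using this
    rw [hfun]

/-- For a set-partition `Λ'` of `{1, …, r+1}` with `l = ℓ(Λ')` parts (`1 ≤ l ≤ n`),
`V'(Λ') ≅ H_{n-1}(l-1)` as `k[W_{n-1}]`-modules. -/
theorem stmt_8 (k : Type) [CommRing k] (n r l : ℕ) (hn : 0 < n) (hl : 1 ≤ l)
    (hln : l ≤ n) (Λ' : Setoid (Fin (r + 1))) (hcard : Nat.card (Quotient Λ') = l) :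
    ∃ (h1 : ∀ (w : ↥(stabLast n hn)) (v : (Fin (l - 1) → Fin n) → k),
        v ∈ Hprime k n (l - 1) (by omega) →
          permEnd k n (l - 1) ↑w v ∈ Hprime k n (l - 1) (by omega))
      (h2 : ∀ (w : ↥(stabLast n hn)) (v : (Fin (r + 1) → Fin n) → k),
        v ∈ Vpart' k n r hn Λ' → permEnd k n (r + 1) ↑w v ∈ Vpart' k n r hn Λ')
      (e : ↥(Hprime k n (l - 1) (by omega)) ≃ₗ[k] ↥(Vpart' k n r hn Λ')),
      ∀ (w : ↥(stabLast n hn)) (x : ↥(Hprime k n (l - 1) (by omega))),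
        e ⟨permEnd k n (l - 1) ↑w ↑x, h1 w ↑x x.2⟩ =
          ⟨permEnd k n (r + 1) ↑w ↑(e x), h2 w ↑(e x) (e x).2⟩ := by
  classical
  obtain ⟨m, rfl⟩ : ∃ m, l = m + 1 := ⟨l - 1, by omega⟩
  have hm : m < n := by omega
  suffices hgoal :
      ∃ (h1 : ∀ (w : ↥(stabLast n hn)) (v : (Fin m → Fin n) → k),
          v ∈ Hprime k n m hm → permEnd k n m ↑w v ∈ Hprime k n m hm)
        (h2 : ∀ (w : ↥(stabLast n hn)) (v : (Fin (r + 1) → Fin n) → k),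
          v ∈ Vpart' k n r hn Λ' → permEnd k n (r + 1) ↑w v ∈ Vpart' k n r hn Λ')
        (e : ↥(Hprime k n m hm) ≃ₗ[k] ↥(Vpart' k n r hn Λ')),
        ∀ (w : ↥(stabLast n hn)) (x : ↥(Hprime k n m hm)),
          e ⟨permEnd k n m ↑w ↑x, h1 w ↑x x.2⟩ =
            ⟨permEnd k n (r + 1) ↑w ↑(e x), h2 w ↑(e x) (e x).2⟩ by
    exact hgoal
  -- the last point of `Fin n`
  let pt : Fin n := lastPt n hn
  letI : Fintype (Quotient Λ') := Fintype.ofFinite _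
  have hcard' : Fintype.card (Quotient Λ') = m + 1 := by
    rw [← Nat.card_eq_fintype_card]; exact hcard
  let q₀ : Quotient Λ' := Quotient.mk Λ' (Fin.last r)
  let c0 : Quotient Λ' ≃ Fin (m + 1) :=
    Fintype.equivOfCardEq (by rw [hcard', Fintype.card_fin])
  let c : Quotient Λ' ≃ Fin (m + 1) := c0.trans (Equiv.swap (c0 q₀) (Fin.last m))
  have hc : c q₀ = Fin.last m := by
    simp only [c, Equiv.trans_apply, Equiv.swap_apply_left]
  have kerIff : ∀ (i : Fin (r + 1) → Fin n), Setoid.ker i = Λ' →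
      ∀ x y, i x = i y ↔ Quotient.mk Λ' x = Quotient.mk Λ' y := by
    intro i hk x y
    rw [Quotient.eq]
    constructor
    · intro hxy
      rw [← hk]
      exact hxy
    · intro hxy
      have : (Setoid.ker i) x y := by rw [hk]; exact hxy
      exact this
  let toI : (Fin m → Fin n) → (Fin (r + 1) → Fin n) :=
    fun j t => (Fin.snoc j pt : Fin (m + 1) → Fin n) (c (Quotient.mk Λ' t))
  let toJ : (Fin (r + 1) → Fin n) → (Fin m → Fin n) :=
    fun i a => i (c.symm a.castSucc).out
  let S₂ : Set (Fin (r + 1) → Fin n) :=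
    {i | Setoid.ker i = Λ' ∧ i (Fin.last r) = pt}
  have toI_mem : ∀ j ∈ avoidInj n m hn, toI j ∈ S₂ := by
    rintro j ⟨hinj, havoid⟩
    constructor
    · apply Setoid.ext
      intro x y
      rw [Setoid.ker_def]
      show (Fin.snoc j pt : Fin (m + 1) → Fin n) (c (Quotient.mk Λ' x)) = (Fin.snoc j pt : Fin (m + 1) → Fin n) (c (Quotient.mk Λ' y)) ↔ _
      constructor
      · intro hxy
        have := c.injective (snoc_inj hinj havoid hxy)
        rwa [Quotient.eq] at this
      · intro hxy
        have : Quotient.mk Λ' x = Quotient.mk Λ' y := Quotient.sound hxy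
        rw [this]
    · show (Fin.snoc j pt : Fin (m + 1) → Fin n) (c q₀) = pt
      rw [hc, Fin.snoc_last]
  have toJ_mem : ∀ i ∈ S₂, toJ i ∈ avoidInj n m hn := by
    rintro i ⟨hk, hlast⟩
    constructor
    · intro a a' haa
      have h1 := (kerIff i hk _ _).mp haa
      rw [Quotient.out_eq, Quotient.out_eq] at h1
      exact Fin.castSucc_injective m (c.symm.injective h1)
    · intro a hc'
      have h1 : toJ i a = i (Fin.last r) := hc'.trans hlast.symm
      have h2 := (kerIff i hk _ _).mp h1
      rw [Quotient.out_eq] at h2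
      have h3 : a.castSucc = c q₀ := by
        show a.castSucc = c (Quotient.mk Λ' (Fin.last r))
        rw [← h2, Equiv.apply_symm_apply]
      rw [hc] at h3
      exact absurd h3 (Fin.ne_of_lt (Fin.castSucc_lt_last a))
  have toJI : ∀ j, toJ (toI j) = j := by
    intro j
    funext a
    show (Fin.snoc j pt : Fin (m + 1) → Fin n) (c (Quotient.mk Λ' (c.symm a.castSucc).out)) = j a
    rw [Quotient.out_eq, Equiv.apply_symm_apply, Fin.snoc_castSucc]
  have toIJ : ∀ i ∈ S₂, toI (toJ i) = i := by
    rintro i ⟨hk, hlast⟩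
    funext t
    show (Fin.snoc (toJ i) pt : Fin (m + 1) → Fin n) (c (Quotient.mk Λ' t)) = i t
    rcases Fin.eq_castSucc_or_eq_last (c (Quotient.mk Λ' t)) with ⟨a, ha⟩ | ha
    · rw [ha, Fin.snoc_castSucc]
      show i (c.symm a.castSucc).out = i t
      rw [kerIff i hk, Quotient.out_eq, ← ha, Equiv.symm_apply_apply]
    · rw [ha, Fin.snoc_last]
      have h1 : Quotient.mk Λ' t = q₀ := by
        apply c.injective
        rw [ha, hc]
      rw [← hlast]
      rw [kerIff i hk]
      exact h1.symm
  have toI_comm : ∀ (w : Equiv.Perm (Fin n)), w pt = pt → ∀ j,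
      toI (fun a => w (j a)) = fun t => w (toI j t) := by
    intro w hw j
    funext t
    show (Fin.snoc (fun a => w (j a)) pt : Fin (m + 1) → Fin n) (c (Quotient.mk Λ' t))
      = w ((Fin.snoc j pt : Fin (m + 1) → Fin n) (c (Quotient.mk Λ' t)))
    have h := congrFun (Fin.comp_snoc (⇑w) j pt) (c (Quotient.mk Λ' t))
    simp only [Function.comp_apply] at h
    rw [h, hw]
    rfl
  -- generating families
  let v₁ : ↥(avoidInj n m hn) → ((Fin m → Fin n) → k) := fun s => Pi.single s.1 1
  let v₂ : ↥S₂ → ((Fin (r + 1) → Fin n) → k) := fun s => Pi.single s.1 1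
  have hA : Hprime k n m hm = Submodule.span k (Set.range v₁) := by
    rw [Hprime_eq k hm hn, Set.image_eq_range]
  have hB : Vpart' k n r hn Λ' = Submodule.span k (Set.range v₂) := by
    rw [Vpart']
    congr 1
    ext f
    constructor
    · rintro ⟨i, ha, hb, rfl⟩
      exact ⟨⟨i, ha, hb⟩, rfl⟩
    · rintro ⟨⟨i, ha, hb⟩, rfl⟩
      exact ⟨i, ha, hb, rfl⟩
  have hli₁ : LinearIndependent k v₁ := by
    have hv : v₁ = ⇑(Pi.basisFun k (Fin m → Fin n)) ∘ Subtype.val := by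
      funext s
      simp [v₁, Pi.basisFun_apply]
    rw [hv]
    exact (Pi.basisFun k _).linearIndependent.comp _ Subtype.val_injective
  have hli₂ : LinearIndependent k v₂ := by
    have hv : v₂ = ⇑(Pi.basisFun k (Fin (r + 1) → Fin n)) ∘ Subtype.val := by
      funext s
      simp [v₂, Pi.basisFun_apply]
    rw [hv]
    exact (Pi.basisFun k _).linearIndependent.comp _ Subtype.val_injective
  let E : ↥(avoidInj n m hn) ≃ ↥S₂ :=
    { toFun := fun s => ⟨toI s.1, toI_mem s.1 s.2⟩
      invFun := fun s => ⟨toJ s.1, toJ_mem s.1 s.2⟩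
      left_inv := fun s => Subtype.ext (toJI s.1)
      right_inv := fun s => Subtype.ext (toIJ s.1 s.2) }
  let b₁ := Module.Basis.span hli₁
  let b₂ := Module.Basis.span hli₂
  let eH : ↥(Hprime k n m hm) ≃ₗ[k] ↥(Submodule.span k (Set.range v₁)) :=
    LinearEquiv.ofEq _ _ hA
  let eV : ↥(Submodule.span k (Set.range v₂)) ≃ₗ[k] ↥(Vpart' k n r hn Λ') :=
    (LinearEquiv.ofEq _ _ hB).symm
  let e : ↥(Hprime k n m hm) ≃ₗ[k] ↥(Vpart' k n r hn Λ') :=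
    eH.trans ((b₁.equiv b₂ E).trans eV)
  -- stability
  have h1 : ∀ (w : ↥(stabLast n hn)) (v : (Fin m → Fin n) → k),
      v ∈ Hprime k n m hm → permEnd k n m ↑w v ∈ Hprime k n m hm := by
    intro w v hv
    have hmap : Submodule.map (permEnd k n m ↑w) (Hprime k n m hm) ≤ Hprime k n m hm := by
      rw [Hprime, Submodule.map_span, Submodule.span_le]
      rintro _ ⟨_, ⟨w', rfl⟩, rfl⟩
      apply Submodule.subset_span
      refine ⟨⟨(↑w : Equiv.Perm (Fin n)) * ↑w', mul_mem w.2 w'.2⟩, ?_⟩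
      show permEnd k n m ((↑w : Equiv.Perm (Fin n)) * ↑w') _ = _
      rw [map_mul]
      rfl
    exact hmap ⟨v, hv, rfl⟩
  have h2 : ∀ (w : ↥(stabLast n hn)) (v : (Fin (r + 1) → Fin n) → k),
      v ∈ Vpart' k n r hn Λ' → permEnd k n (r + 1) ↑w v ∈ Vpart' k n r hn Λ' := by
    intro w v hv
    have hwpt : (↑w : Equiv.Perm (Fin n)) pt = pt := mem_stabLast.mp w.2
    have hmap : Submodule.map (permEnd k n (r + 1) ↑w) (Vpart' k n r hn Λ')
        ≤ Vpart' k n r hn Λ' := by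
      rw [Vpart', Submodule.map_span, Submodule.span_le]
      rintro _ ⟨_, ⟨i, hk, hlast, rfl⟩, rfl⟩
      apply Submodule.subset_span
      refine ⟨fun t => (↑w : Equiv.Perm (Fin n)) (i t), ?_, ?_, ?_⟩
      · apply Setoid.ext
        intro x y
        rw [Setoid.ker_def]
        rw [(↑w : Equiv.Perm (Fin n)).injective.eq_iff]
        rw [← hk]
        exact Setoid.ker_def
      · show (↑w : Equiv.Perm (Fin n)) (i (Fin.last r)) = pt
        rw [hlast]
        exact hwpt
      · exact (permEnd_single k n (r + 1) ↑w i).symm ▸ rfl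
    exact hmap ⟨v, hv, rfl⟩
  refine ⟨h1, h2, e, ?_⟩
  intro w x
  have hwpt : (↑w : Equiv.Perm (Fin n)) pt = pt := mem_stabLast.mp w.2
  let LH : ↥(Hprime k n m hm) →ₗ[k] ↥(Hprime k n m hm) :=
    (permEnd k n m ↑w).restrict (fun v hv => h1 w v hv)
  let LV : ↥(Vpart' k n r hn Λ') →ₗ[k] ↥(Vpart' k n r hn Λ') :=
    (permEnd k n (r + 1) ↑w).restrict (fun v hv => h2 w v hv)
  have hcomm : (e : ↥(Hprime k n m hm) →ₗ[k] ↥(Vpart' k n r hn Λ')) ∘ₗ LH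
      = LV ∘ₗ (e : ↥(Hprime k n m hm) →ₗ[k] ↥(Vpart' k n r hn Λ')) := by
    apply Module.Basis.ext (b₁.map eH.symm)
    intro s
    have hsmem : (fun a => (↑w : Equiv.Perm (Fin n)) (s.1 a)) ∈ avoidInj n m hn := by
      obtain ⟨hinj, havoid⟩ := s.2
      refine ⟨(↑w : Equiv.Perm (Fin n)).injective.comp hinj, fun a hc' => ?_⟩
      exact havoid a ((↑w : Equiv.Perm (Fin n)).injective (hc'.trans hwpt.symm))
    let s' : ↥(avoidInj n m hn) := ⟨fun a => (↑w : Equiv.Perm (Fin n)) (s.1 a), hsmem⟩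
    -- step 1 : LH (eH.symm (b₁ s)) = eH.symm (b₁ s')
    have step1 : LH ((b₁.map eH.symm) s) = (b₁.map eH.symm) s' := by
      apply Subtype.ext
      have hL : ((LH ((b₁.map eH.symm) s) : ↥(Hprime k n m hm)) : (Fin m → Fin n) → k)
          = permEnd k n m ↑w ((b₁.map eH.symm) s : (Fin m → Fin n) → k) := by
        rw [LinearMap.restrict_apply]
      rw [hL]
      have hcoe : ∀ t : ↥(avoidInj n m hn),
          (((b₁.map eH.symm) t : ↥(Hprime k n m hm)) : (Fin m → Fin n) → k) = v₁ t := by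
        intro t
        rw [Module.Basis.map_apply]
        have : ((eH.symm (b₁ t) : ↥(Hprime k n m hm)) : (Fin m → Fin n) → k)
            = ((b₁ t : ↥(Submodule.span k (Set.range v₁))) : (Fin m → Fin n) → k) := rfl
        rw [this, Module.Basis.span_apply]
      rw [hcoe s, hcoe s']
      show permEnd k n m ↑w (Pi.single s.1 1) = Pi.single s'.1 1
      rw [permEnd_single]
    -- step 2 : e ((b₁.map eH.symm) t) = eV (b₂ (E t))
    have step2 : ∀ t : ↥(avoidInj n m hn), e ((b₁.map eH.symm) t) = eV (b₂ (E t)) := by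
      intro t
      show eV ((b₁.equiv b₂ E) (eH (eH.symm (b₁ t)))) = eV (b₂ (E t))
      rw [LinearEquiv.apply_symm_apply, Module.Basis.equiv_apply]
    -- step 3 : LV (eV (b₂ u)) = eV (b₂ u') coordinates
    have hveq : ∀ u : ↥S₂, ((eV (b₂ u) : ↥(Vpart' k n r hn Λ')) : (Fin (r + 1) → Fin n) → k)
        = v₂ u := by
      intro u
      have : ((eV (b₂ u) : ↥(Vpart' k n r hn Λ')) : (Fin (r + 1) → Fin n) → k)
          = ((b₂ u : ↥(Submodule.span k (Set.range v₂))) : (Fin (r + 1) → Fin n) → k) := rfl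
      rw [this, Module.Basis.span_apply]
    have hEs' : (E s').1 = fun t => (↑w : Equiv.Perm (Fin n)) ((E s).1 t) := by
      show toI s'.1 = _
      rw [toI_comm ↑w hwpt s.1]
      rfl
    calc e (LH ((b₁.map eH.symm) s)) = e ((b₁.map eH.symm) s') := by rw [step1]
      _ = eV (b₂ (E s')) := step2 s'
      _ = LV (eV (b₂ (E s))) := by
          apply Subtype.ext
          have hL : ((LV (eV (b₂ (E s))) : ↥(Vpart' k n r hn Λ')) : (Fin (r + 1) → Fin n) → k)
              = permEnd k n (r + 1) ↑w ((eV (b₂ (E s)) : ↥(Vpart' k n r hn Λ'))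
                : (Fin (r + 1) → Fin n) → k) := by
            rw [LinearMap.restrict_apply]
          rw [hL, hveq, hveq]
          show Pi.single (E s').1 (1:k) = permEnd k n (r + 1) ↑w (Pi.single (E s).1 1)
          rw [permEnd_single, hEs']
      _ = LV (e ((b₁.map eH.symm) s)) := by rw [step2 s]
  have hres : (⟨permEnd k n m ↑w ↑x, h1 w ↑x x.2⟩ : ↥(Hprime k n m hm)) = LH x :=
    Subtype.ext (by rw [LinearMap.restrict_apply])
  have hres2 : (⟨permEnd k n (r + 1) ↑w ↑(e x), h2 w ↑(e x) (e x).2⟩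
      : ↥(Vpart' k n r hn Λ')) = LV (e x) :=
    Subtype.ext (by rw [LinearMap.restrict_apply])
  rw [hres, hres2]
  have := LinearMap.congr_fun hcomm x
  simpa only [LinearMap.comp_apply, LinearEquiv.coe_coe] using this
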